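/- Let L ≥ 2 be an integer and set c = (√L − 1)/(L − 1). Define the linear map A : ℝ^L → ℝ^{L−1} by (Ad)_i = d_{i+1} − c·d_1 for i = 1,…,L−1 (i.e., A has first column equal to (−c,…,−c)ᵀ and the remaining (L−1)×(L−1) block equal to the identity). Then ‖Ad‖ = ‖d‖ (Euclidean norms) for every d ∈ ℝ^L with Σ_{l=1}^{L} d_l = 0, and the restriction of A to the hyperplane {d ∈ ℝ^L : Σ_l d_l = 0} is a linear isometric bijection onto ℝ^{L−1}. -/

import Mathlib

open Finset

lemma key_norm (m : ℕ) (hm : 1 ≤ m) (c : ℝ)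
    (hc : c = (Real.sqrt (m + 1) - 1) / m)
    (e : EuclideanSpace ℝ (Fin (m + 1))) (he : ∑ l, e l = 0)
    (v : EuclideanSpace ℝ (Fin m)) (hv : ∀ i, v i = e i.succ - c * e 0) :
    ‖v‖ = ‖e‖ := by
  have hm0 : (m : ℝ) ≠ 0 := by
    have : (1:ℝ) ≤ m := by exact_mod_cast hm
    linarith
  have hs : Real.sqrt (m + 1) ^ 2 = m + 1 := Real.sq_sqrt (by positivity)
  have hcc : (m : ℝ) * c ^ 2 + 2 * c = 1 := by
    rw [hc]; field_simp; nlinarith [hs]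
  have hsum : ∑ i : Fin m, e i.succ = - e 0 := by
    have h := he; rw [Fin.sum_univ_succ] at h; linarith
  rw [EuclideanSpace.norm_eq, EuclideanSpace.norm_eq]
  congr 1
  simp only [Real.norm_eq_abs, sq_abs, hv]
  rw [Fin.sum_univ_succ]
  have h1 : ∑ i : Fin m, (e i.succ - c * e 0) ^ 2
      = (∑ i : Fin m, (e i.succ) ^ 2) + (-2 * c * e 0) * (∑ i : Fin m, e i.succ)
        + (m : ℝ) * (c * e 0) ^ 2 := by
    rw [Finset.mul_sum,
      show (m : ℝ) * (c * e 0) ^ 2 = ∑ _i : Fin m, (c * e 0) ^ 2 by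
        simp [Finset.sum_const], ← Finset.sum_add_distrib, ← Finset.sum_add_distrib]
    exact Finset.sum_congr rfl fun i _ => by ring
  rw [h1, hsum]
  linear_combination (e 0) ^ 2 * hcc

theorem stmt_8
    (m : ℕ) (hm : 1 ≤ m)
    (c : ℝ) (hc : c = (Real.sqrt (m + 1) - 1) / m)
    (A : EuclideanSpace ℝ (Fin (m + 1)) → EuclideanSpace ℝ (Fin m))
    (hA : ∀ (d : EuclideanSpace ℝ (Fin (m + 1))) (i : Fin m),
      A d i = d i.succ - c * d 0) :
    (∀ d : EuclideanSpace ℝ (Fin (m + 1)), ∑ l, d l = 0 → ‖A d‖ = ‖d‖) ∧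
    (∀ d ∈ {d : EuclideanSpace ℝ (Fin (m + 1)) | ∑ l, d l = 0},
      ∀ d' ∈ {d : EuclideanSpace ℝ (Fin (m + 1)) | ∑ l, d l = 0},
        dist (A d) (A d') = dist d d') ∧
    Set.BijOn A {d : EuclideanSpace ℝ (Fin (m + 1)) | ∑ l, d l = 0}
      Set.univ := by
  have hm0 : (m : ℝ) ≠ 0 := by
    have : (1:ℝ) ≤ m := by exact_mod_cast hm
    linarith
  have hs : Real.sqrt (m + 1) ^ 2 = m + 1 := Real.sq_sqrt (by positivity)
  have hspos : 0 < Real.sqrt (m + 1) := Real.sqrt_pos.mpr (by positivity)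
  have hdist : ∀ d ∈ {d : EuclideanSpace ℝ (Fin (m + 1)) | ∑ l, d l = 0},
      ∀ d' ∈ {d : EuclideanSpace ℝ (Fin (m + 1)) | ∑ l, d l = 0},
        dist (A d) (A d') = dist d d' := by
    intro d hd d' hd'
    rw [dist_eq_norm, dist_eq_norm]
    apply key_norm m hm c hc (d - d')
    · simp only [Set.mem_setOf_eq] at hd hd'
      simp [PiLp.sub_apply, Finset.sum_sub_distrib, hd, hd']
    · intro i
      simp [PiLp.sub_apply, hA]
      ring
  refine ⟨fun d hd => key_norm m hm c hc d hd (A d) (hA d), hdist, ?_, ?_, ?_⟩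
  · intro d _; trivial
  · intro d hd d' hd' h
    have := hdist d hd d' hd'
    rw [h, dist_self] at this
    exact (dist_eq_zero.mp this.symm)
  · intro y _
    set t : ℝ := -(∑ i, y i) / Real.sqrt (m + 1) with ht
    refine ⟨WithLp.toLp 2 (Fin.cons t fun i => y i + c * t : Fin (m + 1) → ℝ), ?_, ?_⟩
    · simp only [Set.mem_setOf_eq]
      rw [Fin.sum_univ_succ]
      simp only [PiLp.toLp_apply, Fin.cons_zero, Fin.cons_succ]
      rw [Finset.sum_add_distrib, Finset.sum_const]
      simp only [Finset.card_univ, Fintype.card_fin, nsmul_eq_mul]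
      have hmc : (m : ℝ) * c = Real.sqrt (m + 1) - 1 := by
        rw [hc]; field_simp
      have : t * Real.sqrt (m + 1) = -(∑ i, y i) := by
        rw [ht]; field_simp
      linear_combination this + t * hmc
    · ext i
      rw [hA]
      simp [Fin.cons_zero, Fin.cons_succ]
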